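/- Let X_n be a sequence of ℝ^d-valued random vectors on a probability space such that liminf_n ‖X_n(ω)‖ < ∞ for almost all ω. Then there exists an increasing sequence of integer-valued random variables σ_k such that X_{σ_k} converges almost surely; equivalently, there is a sequence of ℝ^d-valued random vectors Y_n converging pointwise almost surely to some ℝ^d-valued random vector Y, such that for almost all ω the sequence (Y_n(ω)) is a convergent subsequence of (X_n(ω)). -/

import Mathlib

open MeasureTheory Filter Finset
open scoped ENNReal NNReal

noncomputable section

namespace BidAskFTAP

variable {Ω : Type*}

/-- Componentwise positive part of a vector in `ℝ^d`. -/
def posPart {d : ℕ} (x : Fin d → ℝ) : Fin d → ℝ := fun i => max (x i) 0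

/-- Componentwise negative part of a vector in `ℝ^d`. -/
def negPart {d : ℕ} (x : Fin d → ℝ) : Fin d → ℝ := fun i => max (-(x i)) 0

/-- Inner product on `ℝ^d`. -/
def dotp {d : ℕ} (x y : Fin d → ℝ) : ℝ := ∑ i, x i * y i

section Market

variable [m : MeasurableSpace Ω] {d : ℕ}

/-- `F` is a filtration on `(Ω, m)` with horizon `T`: monotone, sub-σ-algebras of `m`,
and `F T = m` (i.e. `𝓕_T = 𝓕`). -/
def IsFiltration (F : ℕ → MeasurableSpace Ω) (T : ℕ) : Prop :=
  Monotone F ∧ (∀ t, F t ≤ m) ∧ F T = m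

/-- Adaptedness of an `ℝ^d`-valued process up to time `T`. -/
def AdaptedProc (F : ℕ → MeasurableSpace Ω) (T : ℕ) (S : ℕ → Ω → Fin d → ℝ) : Prop :=
  ∀ t ≤ T, Measurable[F t] (S t)

/-- Standing assumptions on the bid and ask price processes `S̲ = Sb`, `S̄ = Sa`:
adapted, strictly positive components, and `S̲ ≤ S̄` a.s. -/
def IsBidAsk (P : Measure Ω) (F : ℕ → MeasurableSpace Ω) (T : ℕ)
    (Sb Sa : ℕ → Ω → Fin d → ℝ) : Prop :=
  AdaptedProc F T Sb ∧ AdaptedProc F T Sa ∧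
  (∀ t ≤ T, ∀ i, ∀ᵐ ω ∂P, 0 < Sb t ω i) ∧
  (∀ t ≤ T, ∀ i, ∀ᵐ ω ∂P, 0 < Sa t ω i) ∧
  (∀ t ≤ T, ∀ i, ∀ᵐ ω ∂P, Sb t ω i ≤ Sa t ω i)

/-- A trading strategy on horizon `T`: predictable (`H t` is `𝓕_{t-1}`-measurable),
with the convention `H 0 = 0` (so that `ΔH 1 = H 1`). -/
def IsStrategy (F : ℕ → MeasurableSpace Ω) (T : ℕ) (H : ℕ → Ω → Fin d → ℝ) : Prop :=
  H 0 = 0 ∧ ∀ t, 1 ≤ t → t ≤ T → Measurable[F (t - 1)] (H t)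

/-- Membership in `𝒫_T^+`: componentwise nonnegative. -/
def NonnegStrategy (T : ℕ) (H : ℕ → Ω → Fin d → ℝ) : Prop :=
  ∀ t ≤ T, ∀ ω, ∀ i, 0 ≤ H t ω i

/-- Membership in `𝒫_T^-`: componentwise nonpositive. -/
def NonposStrategy (T : ℕ) (H : ℕ → Ω → Fin d → ℝ) : Prop :=
  ∀ t ≤ T, ∀ ω, ∀ i, H t ω i ≤ 0

/-- Uniformly bounded strategy. -/
def BoundedStrategy (T : ℕ) (H : ℕ → Ω → Fin d → ℝ) : Prop :=
  ∃ C : ℝ, ∀ t ≤ T, ∀ ω, ∀ i, |H t ω i| ≤ C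

/-- The immediate–liquidation value process
`x_T(H) = -∑_{j=1}^T (ΔH_j)⁺·S̄_{j-1} + ∑_{j=1}^T (ΔH_j)⁻·S̲_{j-1} + (H_T)⁺·S̲_T - (H_T)⁻·S̄_T`. -/
def xval (Sb Sa : ℕ → Ω → Fin d → ℝ) (T : ℕ) (H : ℕ → Ω → Fin d → ℝ) (ω : Ω) : ℝ :=
  (∑ j ∈ Icc 1 T, (dotp (negPart (H j ω - H (j - 1) ω)) (Sb (j - 1) ω)
    - dotp (posPart (H j ω - H (j - 1) ω)) (Sa (j - 1) ω)))
  + dotp (posPart (H T ω)) (Sb T ω) - dotp (negPart (H T ω)) (Sa T ω)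

/-- The gain `(H · S)_T = ∑_{j=1}^T H_j · (S_j - S_{j-1})`. -/
def gain (S : ℕ → Ω → Fin d → ℝ) (T : ℕ) (H : ℕ → Ω → Fin d → ℝ) (ω : Ω) : ℝ :=
  ∑ j ∈ Icc 1 T, dotp (H j ω) (S j ω - S (j - 1) ω)

/-- Membership (as elements of `L⁰`, i.e. up to a.s. equality) in
`𝒜_t = ℛ_t - L⁰₊(𝓕_t)`. -/
def memA (P : Measure Ω) (F : ℕ → MeasurableSpace Ω) (Sb Sa : ℕ → Ω → Fin d → ℝ)
    (t : ℕ) (f : Ω → ℝ) : Prop :=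
  ∃ H : ℕ → Ω → Fin d → ℝ, IsStrategy F t H ∧
    ∃ r : Ω → ℝ, Measurable[F t] r ∧ (∀ᵐ ω ∂P, 0 ≤ r ω) ∧
      f =ᵐ[P] fun ω => xval Sb Sa t H ω - r ω

/-- The no-arbitrage condition `𝒜_t ∩ L⁰₊(𝓕_t) = {0}` at horizon `t`. -/
def NA (P : Measure Ω) (F : ℕ → MeasurableSpace Ω) (Sb Sa : ℕ → Ω → Fin d → ℝ)
    (t : ℕ) : Prop :=
  ∀ f : Ω → ℝ, memA P F Sb Sa t f → (∀ᵐ ω ∂P, 0 ≤ f ω) → f =ᵐ[P] 0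

/-- Two measures are equivalent: mutually absolutely continuous. -/
def EquivMeasure (P Q : Measure Ω) : Prop := P ≪ Q ∧ Q ≪ P

/-- The Radon–Nikodym density `dQ/dP` belongs to `L^∞(P)`. -/
def BoundedDensity (P Q : Measure Ω) : Prop :=
  ∃ C : ℝ≥0, ∀ᵐ ω ∂P, Q.rnDeriv P ω ≤ (C : ℝ≥0∞)

/-- `Q` is an equivalent bid-ask martingale measure (EBAMM) for `(S̲, S̄)`:
`Q ∼ P`, all `S̄_t` are `Q`-integrable, and for all `1 ≤ t ≤ T` and coordinates `i`:
`S̲_{t-1}^i ≤ E_Q[S̄_t^i | 𝓕_{t-1}]` and `E_Q[S̲_t^i | 𝓕_{t-1}] ≤ S̄_{t-1}^i` a.s. -/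
def IsEBAMM (P : Measure Ω) (F : ℕ → MeasurableSpace Ω) (T : ℕ)
    (Sb Sa : ℕ → Ω → Fin d → ℝ) (Q : Measure Ω) : Prop :=
  IsProbabilityMeasure Q ∧ EquivMeasure P Q ∧
  (∀ t ≤ T, ∀ i, Integrable (fun ω => Sa t ω i) Q) ∧
  (∀ t, 1 ≤ t → t ≤ T → ∀ i,
    (∀ᵐ ω ∂P, Sb (t - 1) ω i ≤ (Q[fun ω => Sa t ω i | F (t - 1)]) ω) ∧
    (∀ᵐ ω ∂P, (Q[fun ω => Sb t ω i | F (t - 1)]) ω ≤ Sa (t - 1) ω i))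

/-- `(S̃, Q)` is a consistent price system: `Q ∼ P`, `S̃` adapted, evolving between bid and
ask prices, and a `Q`-martingale. -/
def IsCPS (P : Measure Ω) (F : ℕ → MeasurableSpace Ω) (T : ℕ)
    (Sb Sa St : ℕ → Ω → Fin d → ℝ) (Q : Measure Ω) : Prop :=
  IsProbabilityMeasure Q ∧ EquivMeasure P Q ∧ AdaptedProc F T St ∧
  (∀ t ≤ T, ∀ i, Integrable (fun ω => St t ω i) Q) ∧
  (∀ t ≤ T, ∀ i, ∀ᵐ ω ∂P, Sb t ω i ≤ St t ω i ∧ St t ω i ≤ Sa t ω i) ∧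
  (∀ t, 1 ≤ t → t ≤ T → ∀ i,
    Q[fun ω => St t ω i | F (t - 1)] =ᵐ[P] fun ω => St (t - 1) ω i)

/-- `(S̃, Q)` is a supermartingale consistent price system. -/
def IsSupCPS (P : Measure Ω) (F : ℕ → MeasurableSpace Ω) (T : ℕ)
    (Sb Sa St : ℕ → Ω → Fin d → ℝ) (Q : Measure Ω) : Prop :=
  IsProbabilityMeasure Q ∧ EquivMeasure P Q ∧ AdaptedProc F T St ∧
  (∀ t ≤ T, ∀ i, Integrable (fun ω => St t ω i) Q) ∧
  (∀ t ≤ T, ∀ i, ∀ᵐ ω ∂P, Sb t ω i ≤ St t ω i ∧ St t ω i ≤ Sa t ω i) ∧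
  (∀ t, 1 ≤ t → t ≤ T → ∀ i,
    (∀ᵐ ω ∂P, (Q[fun ω => St t ω i | F (t - 1)]) ω ≤ St (t - 1) ω i))

/-- `(S̃, Q)` is a submartingale consistent price system. -/
def IsSubCPS (P : Measure Ω) (F : ℕ → MeasurableSpace Ω) (T : ℕ)
    (Sb Sa St : ℕ → Ω → Fin d → ℝ) (Q : Measure Ω) : Prop :=
  IsProbabilityMeasure Q ∧ EquivMeasure P Q ∧ AdaptedProc F T St ∧
  (∀ t ≤ T, ∀ i, Integrable (fun ω => St t ω i) Q) ∧
  (∀ t ≤ T, ∀ i, ∀ᵐ ω ∂P, Sb t ω i ≤ St t ω i ∧ St t ω i ≤ Sa t ω i) ∧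
  (∀ t, 1 ≤ t → t ≤ T → ∀ i,
    (∀ᵐ ω ∂P, St (t - 1) ω i ≤ (Q[fun ω => St t ω i | F (t - 1)]) ω))

/-- Membership (up to a.s. equality) in
`F_{t-1,t+k} = ℛ_{t-1,t+k}⁺ + ℛ_{t-1,t+k}⁻ - L⁰₊(𝓕_{t+k})`:
`f = Hp·(S̲_{t+k} - S̄_{t-1}) - Hm·(S̄_{t+k} - S̲_{t-1}) - r` with `Hp, Hm ≥ 0`
`𝓕_{t-1}`-measurable and `r ∈ L⁰₊(𝓕_{t+k})`. -/
def memFtk (P : Measure Ω) (F : ℕ → MeasurableSpace Ω) (Sb Sa : ℕ → Ω → Fin d → ℝ)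
    (t k : ℕ) (f : Ω → ℝ) : Prop :=
  ∃ (Hp Hm : Ω → Fin d → ℝ) (r : Ω → ℝ),
    Measurable[F (t - 1)] Hp ∧ Measurable[F (t - 1)] Hm ∧
    (∀ ω i, 0 ≤ Hp ω i) ∧ (∀ ω i, 0 ≤ Hm ω i) ∧
    Measurable[F (t + k)] r ∧ (∀ᵐ ω ∂P, 0 ≤ r ω) ∧
    f =ᵐ[P] fun ω =>
      dotp (Hp ω) (Sb (t + k) ω - Sa (t - 1) ω)
        - dotp (Hm ω) (Sa (t + k) ω - Sb (t - 1) ω) - r ω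

/-- Membership (up to a.s. equality) in
`F_t = ∑_{j<t} ℛ_{j,t}⁺ + ∑_{j<t} ℛ_{j,t}⁻ - L⁰₊(𝓕_t)`. -/
def memFt (P : Measure Ω) (F : ℕ → MeasurableSpace Ω) (Sb Sa : ℕ → Ω → Fin d → ℝ)
    (t : ℕ) (f : Ω → ℝ) : Prop :=
  ∃ (Hp Hm : ℕ → Ω → Fin d → ℝ) (r : Ω → ℝ),
    (∀ j < t, Measurable[F j] (Hp j) ∧ Measurable[F j] (Hm j)) ∧
    (∀ j < t, ∀ ω i, 0 ≤ Hp j ω i ∧ 0 ≤ Hm j ω i) ∧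
    Measurable[F t] r ∧ (∀ᵐ ω ∂P, 0 ≤ r ω) ∧
    f =ᵐ[P] fun ω =>
      (∑ j ∈ range t,
        (dotp (Hp j ω) (Sb t ω - Sa j ω) - dotp (Hm j ω) (Sa t ω - Sb j ω))) - r ω

/-- `x_{s,u}(H) = -H⁺·S̄_s + H⁻·S̲_s + H⁺·S̲_u - H⁻·S̄_u` for an `𝓕_s`-measurable `H`. -/
def xval2 (Sb Sa : ℕ → Ω → Fin d → ℝ) (s u : ℕ) (H : Ω → Fin d → ℝ) (ω : Ω) : ℝ :=
  - dotp (posPart (H ω)) (Sa s ω) + dotp (negPart (H ω)) (Sb s ω)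
    + dotp (posPart (H ω)) (Sb u ω) - dotp (negPart (H ω)) (Sa u ω)

/-- Membership (up to a.s. equality) in `𝒜_{t-1,t+k} = ℛ_{t-1,t+k} - L⁰₊(𝓕_{t+k})` where
`ℛ_{t-1,t+k} = {x_{t-1,t+k}(H) : H ∈ L⁰(ℝ^d, 𝓕_{t-1})}`. -/
def memA2 (P : Measure Ω) (F : ℕ → MeasurableSpace Ω) (Sb Sa : ℕ → Ω → Fin d → ℝ)
    (t k : ℕ) (f : Ω → ℝ) : Prop :=
  ∃ (H : Ω → Fin d → ℝ) (r : Ω → ℝ),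
    Measurable[F (t - 1)] H ∧ Measurable[F (t + k)] r ∧ (∀ᵐ ω ∂P, 0 ≤ r ω) ∧
    f =ᵐ[P] fun ω => xval2 Sb Sa (t - 1) (t + k) H ω - r ω

end Market

end BidAskFTAP

namespace Stmt15Aux

open Filter

variable {Ω : Type*} [MeasurableSpace Ω] {d : ℕ}

/-- membership in the closed cube with lower corner `a` and side `s`. -/
def inCube (a : Fin d → ℝ) (s : ℝ) (x : Fin d → ℝ) : Prop :=
  ∀ i, a i ≤ x i ∧ x i ≤ a i + s

/-- a fixed surjection `ℕ → (Fin d → Bool)`. -/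
noncomputable def dec (d : ℕ) : ℕ → (Fin d → Bool) :=
  (exists_surjective_nat (Fin d → Bool)).choose

lemma dec_surj (d : ℕ) : Function.Surjective (dec d) :=
  (exists_surjective_nat (Fin d → Bool)).choose_spec

/-- the `j`-th subcube (of half side) of the cube `(a, s)`. -/
noncomputable def subCorner (a : Fin d → ℝ) (s : ℝ) (j : ℕ) : Fin d → ℝ :=
  fun i => a i + (if dec d j i then s / 2 else 0)

/-- Infinitely many of the `X n ω` lie in the cube `(a, s)`. -/
def Freq (X : ℕ → Ω → Fin d → ℝ) (a : Fin d → ℝ) (s : ℝ) (ω : Ω) : Prop :=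
  ∀ m : ℕ, ∃ n, m ≤ n ∧ inCube a s (X n ω)

noncomputable def pick (X : ℕ → Ω → Fin d → ℝ) (a : Ω → Fin d → ℝ) (s : Ω → ℝ) (ω : Ω) : ℕ :=
  sInf {j | Freq X (subCorner (a ω) (s ω) j) (s ω / 2) ω ∨
    (j = 0 ∧ ¬ ∃ j', Freq X (subCorner (a ω) (s ω) j') (s ω / 2) ω)}

noncomputable def corner (X : ℕ → Ω → Fin d → ℝ) (M : Ω → ℝ) : ℕ → Ω → Fin d → ℝ
  | 0 => fun ω _ => -(M ω)
  | k + 1 => fun ω =>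
      subCorner (corner X M k ω) (2 * M ω / 2 ^ k)
        (pick X (corner X M k) (fun ω' => 2 * M ω' / 2 ^ k) ω)

noncomputable def sel (X : ℕ → Ω → Fin d → ℝ) (M : Ω → ℝ) : ℕ → Ω → ℕ
  | 0 => fun ω => sInf {n | inCube (corner X M 0 ω) (2 * M ω / 2 ^ 0) (X n ω) ∨
      (n = 0 ∧ ¬ ∃ n', inCube (corner X M 0 ω) (2 * M ω / 2 ^ 0) (X n' ω))}
  | k + 1 => fun ω => sInf {n |
      (sel X M k ω < n ∧ inCube (corner X M (k + 1) ω) (2 * M ω / 2 ^ (k + 1)) (X n ω)) ∨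
      (n = sel X M k ω + 1 ∧
        ¬ ∃ n', sel X M k ω < n' ∧
          inCube (corner X M (k + 1) ω) (2 * M ω / 2 ^ (k + 1)) (X n' ω))}

lemma measurable_sInf' {p : ℕ → Ω → Prop} (hp : ∀ n, MeasurableSet {ω | p n ω}) :
    Measurable fun ω => sInf {n | p n ω} := by
  apply measurable_to_countable'
  intro m
  have key : (fun ω => sInf {n | p n ω}) ⁻¹' {m} =
      ({ω | p m ω} ∩ ⋂ k, ⋂ _ : k < m, {ω | p k ω}ᶜ) ∪
        ((⋂ n, {ω | p n ω}ᶜ) ∩ {_ω : Ω | m = 0}) := by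
    ext ω
    simp only [Set.mem_preimage, Set.mem_singleton_iff, Set.mem_union, Set.mem_inter_iff,
      Set.mem_iInter, Set.mem_compl_iff, Set.mem_setOf_eq]
    constructor
    · rintro rfl
      by_cases h : ∃ n, p n ω
      · exact Or.inl ⟨Nat.sInf_mem h, fun k hk => Nat.notMem_of_lt_sInf hk⟩
      · refine Or.inr ⟨fun n hn => h ⟨n, hn⟩, ?_⟩
        have he : {n | p n ω} = ∅ := by
          ext n
          simp only [Set.mem_setOf_eq, Set.mem_empty_iff_false, iff_false]
          exact fun hn => h ⟨n, hn⟩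
        rw [he, Nat.sInf_empty]
    · rintro (⟨hm, hlt⟩ | ⟨hall, rfl⟩)
      · refine le_antisymm (Nat.sInf_le hm) ?_
        by_contra hlt'
        push_neg at hlt'
        have hmem := Nat.sInf_mem (⟨m, hm⟩ : Set.Nonempty {n | p n ω})
        exact hlt _ hlt' hmem
      · have he : {n | p n ω} = ∅ := by
          ext n
          simp only [Set.mem_setOf_eq, Set.mem_empty_iff_false, iff_false]
          exact hall n
        rw [he, Nat.sInf_empty]
  rw [key]
  exact ((hp m).inter (MeasurableSet.iInter fun k =>
      MeasurableSet.iInter fun _ => (hp k).compl)).union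
    ((MeasurableSet.iInter fun n => (hp n).compl).inter (MeasurableSet.const _))

lemma measurableSet_inCube {a : Ω → Fin d → ℝ} {s : Ω → ℝ} {x : Ω → Fin d → ℝ}
    (ha : Measurable a) (hs : Measurable s) (hx : Measurable x) :
    MeasurableSet {ω | inCube (a ω) (s ω) (x ω)} := by
  have key : {ω | inCube (a ω) (s ω) (x ω)} =
      ⋂ i, ({ω | a ω i ≤ x ω i} ∩ {ω | x ω i ≤ a ω i + s ω}) := by
    ext ω
    simp only [Set.mem_setOf_eq, Set.mem_iInter, Set.mem_inter_iff, inCube]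
  rw [key]
  exact MeasurableSet.iInter fun i =>
    (measurableSet_le ((measurable_pi_apply i).comp ha) ((measurable_pi_apply i).comp hx)).inter
      (measurableSet_le ((measurable_pi_apply i).comp hx)
        (((measurable_pi_apply i).comp ha).add hs))

lemma measurableSet_freq {X : ℕ → Ω → Fin d → ℝ} (hX : ∀ n, Measurable (X n))
    {a : Ω → Fin d → ℝ} {s : Ω → ℝ} (ha : Measurable a) (hs : Measurable s) :
    MeasurableSet {ω | Freq X (a ω) (s ω) ω} := by
  have key : {ω | Freq X (a ω) (s ω) ω} =
      ⋂ m, ⋃ n, ⋃ _ : m ≤ n, {ω | inCube (a ω) (s ω) (X n ω)} := by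
    ext ω
    simp only [Freq, Set.mem_setOf_eq, Set.mem_iInter, Set.mem_iUnion]
    exact ⟨fun h m => (h m).imp fun n hn => ⟨hn.1, hn.2⟩,
           fun h m => (h m).imp fun n hn => ⟨hn.1, hn.2⟩⟩
  rw [key]
  exact MeasurableSet.iInter fun m => MeasurableSet.iUnion fun n =>
    MeasurableSet.iUnion fun _ => measurableSet_inCube ha hs (hX n)

lemma measurable_subCorner {a : Ω → Fin d → ℝ} {s : Ω → ℝ} (ha : Measurable a)
    (hs : Measurable s) (j : ℕ) : Measurable fun ω => subCorner (a ω) (s ω) j := by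
  apply measurable_pi_lambda
  intro i
  simp only [subCorner]
  cases hb : dec d j i
  · simpa [hb] using (show Measurable fun c => a c i from (measurable_pi_apply i).comp ha)
  · simpa [hb] using (show Measurable fun c => a c i + s c / 2 from
      ((measurable_pi_apply i).comp ha).add (hs.div_const 2))

lemma measurable_pick {X : ℕ → Ω → Fin d → ℝ} (hX : ∀ n, Measurable (X n))
    {a : Ω → Fin d → ℝ} {s : Ω → ℝ} (ha : Measurable a) (hs : Measurable s) :
    Measurable (pick X a s) := by
  unfold pick
  apply measurable_sInf'
  intro j
  have h1 : ∀ j', MeasurableSet {ω | Freq X (subCorner (a ω) (s ω) j') (s ω / 2) ω} :=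
    fun j' => measurableSet_freq hX (measurable_subCorner ha hs j') (hs.div_const 2)
  have h2 : MeasurableSet {ω | ∃ j', Freq X (subCorner (a ω) (s ω) j') (s ω / 2) ω} := by
    rw [show {ω | ∃ j', Freq X (subCorner (a ω) (s ω) j') (s ω / 2) ω}
        = ⋃ j', {ω | Freq X (subCorner (a ω) (s ω) j') (s ω / 2) ω} by ext ω; simp]
    exact MeasurableSet.iUnion h1
  have key : {ω | Freq X (subCorner (a ω) (s ω) j) (s ω / 2) ω ∨
      (j = 0 ∧ ¬ ∃ j', Freq X (subCorner (a ω) (s ω) j') (s ω / 2) ω)} =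
      {ω | Freq X (subCorner (a ω) (s ω) j) (s ω / 2) ω} ∪
        ({_ω : Ω | j = 0} ∩ {ω | ∃ j', Freq X (subCorner (a ω) (s ω) j') (s ω / 2) ω}ᶜ) := by
    ext ω
    simp only [Set.mem_union, Set.mem_inter_iff, Set.mem_compl_iff, Set.mem_setOf_eq]
  rw [key]
  exact (h1 j).union ((MeasurableSet.const _).inter h2.compl)

lemma measurable_corner {X : ℕ → Ω → Fin d → ℝ} (hX : ∀ n, Measurable (X n))
    {M : Ω → ℝ} (hM : Measurable M) : ∀ k, Measurable (corner X M k)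
  | 0 => measurable_pi_lambda _ fun _ => hM.neg
  | (k + 1) => by
      have ihc := measurable_corner hX hM k
      have hside : Measurable fun ω' : Ω => 2 * M ω' / 2 ^ k := (hM.const_mul 2).div_const _
      have hp : Measurable (pick X (corner X M k) (fun ω' => 2 * M ω' / 2 ^ k)) :=
        measurable_pick hX ihc hside
      apply measurable_pi_lambda
      intro i
      show Measurable fun ω => corner X M k ω i +
        (if dec d (pick X (corner X M k) (fun ω' => 2 * M ω' / 2 ^ k) ω) i
          then (2 * M ω / 2 ^ k) / 2 else 0)
      apply ((measurable_pi_apply i).comp ihc).add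
      have hset : MeasurableSet
          {ω | dec d (pick X (corner X M k) (fun ω' => 2 * M ω' / 2 ^ k) ω) i = true} := by
        have hre : {ω | dec d (pick X (corner X M k) (fun ω' => 2 * M ω' / 2 ^ k) ω) i = true}
            = (pick X (corner X M k) (fun ω' => 2 * M ω' / 2 ^ k)) ⁻¹'
              {j | dec d j i = true} := rfl
        rw [hre]
        exact hp (by trivial)
      exact Measurable.ite hset (hside.div_const 2) measurable_const

lemma measurable_sel {X : ℕ → Ω → Fin d → ℝ} (hX : ∀ n, Measurable (X n))
    {M : Ω → ℝ} (hM : Measurable M) : ∀ k, Measurable (sel X M k)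
  | 0 => by
      apply measurable_sInf'
      intro n
      have h1 : ∀ n', MeasurableSet {ω | inCube (corner X M 0 ω) (2 * M ω / 2 ^ 0) (X n' ω)} :=
        fun n' => measurableSet_inCube (measurable_corner hX hM 0)
          ((hM.const_mul 2).div_const _) (hX n')
      have h2 : MeasurableSet {ω | ∃ n', inCube (corner X M 0 ω) (2 * M ω / 2 ^ 0) (X n' ω)} := by
        rw [show {ω | ∃ n', inCube (corner X M 0 ω) (2 * M ω / 2 ^ 0) (X n' ω)}
            = ⋃ n', {ω | inCube (corner X M 0 ω) (2 * M ω / 2 ^ 0) (X n' ω)} by ext ω; simp]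
        exact MeasurableSet.iUnion h1
      have key : {ω | inCube (corner X M 0 ω) (2 * M ω / 2 ^ 0) (X n ω) ∨
          (n = 0 ∧ ¬ ∃ n', inCube (corner X M 0 ω) (2 * M ω / 2 ^ 0) (X n' ω))} =
          {ω | inCube (corner X M 0 ω) (2 * M ω / 2 ^ 0) (X n ω)} ∪
            ({_ω : Ω | n = 0} ∩
              {ω | ∃ n', inCube (corner X M 0 ω) (2 * M ω / 2 ^ 0) (X n' ω)}ᶜ) := by
        ext ω
        simp only [Set.mem_union, Set.mem_inter_iff, Set.mem_compl_iff, Set.mem_setOf_eq]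
      rw [key]
      exact (h1 n).union ((MeasurableSet.const _).inter h2.compl)
  | (k + 1) => by
      have ihs := measurable_sel hX hM k
      have hc := measurable_corner hX hM (k + 1)
      have hs2 : Measurable fun ω : Ω => 2 * M ω / 2 ^ (k + 1) := (hM.const_mul 2).div_const _
      apply measurable_sInf'
      intro n
      have h1 : ∀ n', MeasurableSet
          {ω | inCube (corner X M (k + 1) ω) (2 * M ω / 2 ^ (k + 1)) (X n' ω)} :=
        fun n' => measurableSet_inCube hc hs2 (hX n')
      have hlt : ∀ n', MeasurableSet {ω | sel X M k ω < n'} := by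
        intro n'
        have hre : {ω | sel X M k ω < n'} = (sel X M k) ⁻¹' {m' | m' < n'} := rfl
        rw [hre]
        exact ihs (by trivial)
      have heq : MeasurableSet {ω | n = sel X M k ω + 1} := by
        have hre : {ω | n = sel X M k ω + 1} = (sel X M k) ⁻¹' {m' | n = m' + 1} := rfl
        rw [hre]
        exact ihs (by trivial)
      have h2 : MeasurableSet {ω | ∃ n', sel X M k ω < n' ∧
          inCube (corner X M (k + 1) ω) (2 * M ω / 2 ^ (k + 1)) (X n' ω)} := by
        rw [show {ω | ∃ n', sel X M k ω < n' ∧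
            inCube (corner X M (k + 1) ω) (2 * M ω / 2 ^ (k + 1)) (X n' ω)}
            = ⋃ n', ({ω | sel X M k ω < n'} ∩
              {ω | inCube (corner X M (k + 1) ω) (2 * M ω / 2 ^ (k + 1)) (X n' ω)}) by
          ext ω; simp only [Set.mem_setOf_eq, Set.mem_iUnion, Set.mem_inter_iff]]
        exact MeasurableSet.iUnion fun n' => (hlt n').inter (h1 n')
      have key : {ω | (sel X M k ω < n ∧
          inCube (corner X M (k + 1) ω) (2 * M ω / 2 ^ (k + 1)) (X n ω)) ∨
          (n = sel X M k ω + 1 ∧ ¬ ∃ n', sel X M k ω < n' ∧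
            inCube (corner X M (k + 1) ω) (2 * M ω / 2 ^ (k + 1)) (X n' ω))} =
          ({ω | sel X M k ω < n} ∩
            {ω | inCube (corner X M (k + 1) ω) (2 * M ω / 2 ^ (k + 1)) (X n ω)}) ∪
          ({ω | n = sel X M k ω + 1} ∩
            {ω | ∃ n', sel X M k ω < n' ∧
              inCube (corner X M (k + 1) ω) (2 * M ω / 2 ^ (k + 1)) (X n' ω)}ᶜ) := by
        ext ω
        simp only [Set.mem_union, Set.mem_inter_iff, Set.mem_compl_iff, Set.mem_setOf_eq]
      rw [key]
      exact ((hlt n).inter (h1 n)).union (heq.inter h2.compl)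

lemma pigeon {α : Type*} [Fintype α] {p : ℕ → Prop} {f : ℕ → α}
    (h : ∀ m, ∃ n, m ≤ n ∧ p n) : ∃ a, ∀ m, ∃ n, m ≤ n ∧ p n ∧ f n = a := by
  by_contra hc
  push_neg at hc
  choose g hg using hc
  obtain ⟨n, hn, hpn⟩ := h (Finset.univ.sup g)
  exact hg (f n) n (le_trans (Finset.le_sup (Finset.mem_univ (f n))) hn) hpn rfl

lemma inCube_sub {a : Fin d → ℝ} {s : ℝ} {x : Fin d → ℝ} (hs : 0 ≤ s) (j : ℕ)
    (hx : inCube (subCorner a s j) (s / 2) x) : inCube a s x := by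
  intro i
  obtain ⟨h1, h2⟩ := hx i
  simp only [subCorner] at h1 h2
  cases hb : dec d j i <;> rw [hb] at h1 h2 <;> simp at h1 h2 <;> constructor <;> linarith

lemma freq_pick {X : ℕ → Ω → Fin d → ℝ} {a : Ω → Fin d → ℝ} {s : Ω → ℝ} {ω : Ω}
    (hs : 0 ≤ s ω) (h : Freq X (a ω) (s ω) ω) :
    Freq X (subCorner (a ω) (s ω) (pick X a s ω)) (s ω / 2) ω := by
  classical
  obtain ⟨ε, hε⟩ := pigeon (p := fun n => inCube (a ω) (s ω) (X n ω))
    (f := fun n => fun i => decide (a ω i + s ω / 2 ≤ X n ω i)) h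
  obtain ⟨j, hj⟩ := dec_surj d ε
  have hfj : Freq X (subCorner (a ω) (s ω) j) (s ω / 2) ω := by
    intro m
    obtain ⟨n, hn, hcube, hfn⟩ := hε m
    refine ⟨n, hn, fun i => ?_⟩
    obtain ⟨h1, h2⟩ := hcube i
    have hdi : dec d j i = decide (a ω i + s ω / 2 ≤ X n ω i) := by
      rw [hj, ← hfn]
    simp only [subCorner, hdi, decide_eq_true_eq]
    by_cases hle : a ω i + s ω / 2 ≤ X n ω i
    · rw [if_pos hle]
      constructor <;> linarith
    · rw [if_neg hle]
      push_neg at hle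
      constructor <;> linarith
  have hmem := Nat.sInf_mem (⟨j, Or.inl hfj⟩ : Set.Nonempty
    {j' | Freq X (subCorner (a ω) (s ω) j') (s ω / 2) ω ∨
      (j' = 0 ∧ ¬ ∃ j'', Freq X (subCorner (a ω) (s ω) j'') (s ω / 2) ω)})
  rcases hmem with h' | ⟨_, hno⟩
  · exact h'
  · exact absurd ⟨j, hfj⟩ hno

/-- the cube at stage `k` contains infinitely many of the `X n ω`. -/
def GoodAt (X : ℕ → Ω → Fin d → ℝ) (M : Ω → ℝ) (k : ℕ) (ω : Ω) : Prop :=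
  Freq X (corner X M k ω) (2 * M ω / 2 ^ k) ω

lemma goodAt_succ {X : ℕ → Ω → Fin d → ℝ} {M : Ω → ℝ} {ω : Ω} (hM : 0 ≤ M ω) {k : ℕ}
    (h : GoodAt X M k ω) : GoodAt X M (k + 1) ω := by
  have hs : (0 : ℝ) ≤ 2 * M ω / 2 ^ k := by positivity
  have key := freq_pick (X := X) (a := corner X M k)
    (s := fun ω' => 2 * M ω' / 2 ^ k) (ω := ω) hs h
  have heq : 2 * M ω / 2 ^ (k + 1) = (2 * M ω / 2 ^ k) / 2 := by ring
  show Freq X (corner X M (k + 1) ω) (2 * M ω / 2 ^ (k + 1)) ω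
  rw [show corner X M (k + 1) ω = subCorner (corner X M k ω) (2 * M ω / 2 ^ k)
    (pick X (corner X M k) (fun ω' => 2 * M ω' / 2 ^ k) ω) from rfl, heq]
  exact key

lemma goodAt {X : ℕ → Ω → Fin d → ℝ} {M : Ω → ℝ} {ω : Ω} (hM : 0 ≤ M ω)
    (h0 : GoodAt X M 0 ω) : ∀ k, GoodAt X M k ω := by
  intro k
  induction k with
  | zero => exact h0
  | succ k ih => exact goodAt_succ hM ih

lemma sel_lt_succ (X : ℕ → Ω → Fin d → ℝ) (M : Ω → ℝ) (ω : Ω) (k : ℕ) :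
    sel X M k ω < sel X M (k + 1) ω := by
  classical
  have hne : Set.Nonempty {n | (sel X M k ω < n ∧
      inCube (corner X M (k + 1) ω) (2 * M ω / 2 ^ (k + 1)) (X n ω)) ∨
      (n = sel X M k ω + 1 ∧ ¬ ∃ n', sel X M k ω < n' ∧
        inCube (corner X M (k + 1) ω) (2 * M ω / 2 ^ (k + 1)) (X n' ω))} := by
    by_cases h : ∃ n', sel X M k ω < n' ∧
        inCube (corner X M (k + 1) ω) (2 * M ω / 2 ^ (k + 1)) (X n' ω)
    · obtain ⟨n', hn'⟩ := h
      exact ⟨n', Or.inl hn'⟩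
    · exact ⟨sel X M k ω + 1, Or.inr ⟨rfl, h⟩⟩
  have hmem := Nat.sInf_mem hne
  have hdef : sel X M (k + 1) ω = sInf {n | (sel X M k ω < n ∧
      inCube (corner X M (k + 1) ω) (2 * M ω / 2 ^ (k + 1)) (X n ω)) ∨
      (n = sel X M k ω + 1 ∧ ¬ ∃ n', sel X M k ω < n' ∧
        inCube (corner X M (k + 1) ω) (2 * M ω / 2 ^ (k + 1)) (X n' ω))} := rfl
  rw [← hdef] at hmem
  rcases hmem with ⟨h1, _⟩ | ⟨h1, _⟩
  · exact h1
  · rw [h1]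
    exact Nat.lt_succ_self _

lemma sel_inCube {X : ℕ → Ω → Fin d → ℝ} {M : Ω → ℝ} {ω : Ω} (hM : 0 ≤ M ω)
    (h0 : GoodAt X M 0 ω) :
    ∀ k, inCube (corner X M k ω) (2 * M ω / 2 ^ k) (X (sel X M k ω) ω) := by
  intro k
  have hg := goodAt hM h0
  cases k with
  | zero =>
    have hex : ∃ n', inCube (corner X M 0 ω) (2 * M ω / 2 ^ 0) (X n' ω) := by
      obtain ⟨n, _, hn⟩ := hg 0 0
      exact ⟨n, hn⟩
    have hne : Set.Nonempty {n | inCube (corner X M 0 ω) (2 * M ω / 2 ^ 0) (X n ω) ∨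
        (n = 0 ∧ ¬ ∃ n', inCube (corner X M 0 ω) (2 * M ω / 2 ^ 0) (X n' ω))} := by
      obtain ⟨n', hn'⟩ := hex
      exact ⟨n', Or.inl hn'⟩
    have hmem := Nat.sInf_mem hne
    have hdef : sel X M 0 ω = sInf {n | inCube (corner X M 0 ω) (2 * M ω / 2 ^ 0) (X n ω) ∨
        (n = 0 ∧ ¬ ∃ n', inCube (corner X M 0 ω) (2 * M ω / 2 ^ 0) (X n' ω))} := rfl
    rw [← hdef] at hmem
    rcases hmem with h' | ⟨_, hno⟩
    · exact h'
    · exact absurd hex hno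
  | succ k =>
    have hex : ∃ n', sel X M k ω < n' ∧
        inCube (corner X M (k + 1) ω) (2 * M ω / 2 ^ (k + 1)) (X n' ω) := by
      obtain ⟨n, hn, hc⟩ := hg (k + 1) (sel X M k ω + 1)
      exact ⟨n, lt_of_lt_of_le (Nat.lt_succ_self _) hn, hc⟩
    have hne : Set.Nonempty {n | (sel X M k ω < n ∧
        inCube (corner X M (k + 1) ω) (2 * M ω / 2 ^ (k + 1)) (X n ω)) ∨
        (n = sel X M k ω + 1 ∧ ¬ ∃ n', sel X M k ω < n' ∧
          inCube (corner X M (k + 1) ω) (2 * M ω / 2 ^ (k + 1)) (X n' ω))} := by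
      obtain ⟨n', hn'⟩ := hex
      exact ⟨n', Or.inl hn'⟩
    have hmem := Nat.sInf_mem hne
    have hdef : sel X M (k + 1) ω = sInf {n | (sel X M k ω < n ∧
        inCube (corner X M (k + 1) ω) (2 * M ω / 2 ^ (k + 1)) (X n ω)) ∨
        (n = sel X M k ω + 1 ∧ ¬ ∃ n', sel X M k ω < n' ∧
          inCube (corner X M (k + 1) ω) (2 * M ω / 2 ^ (k + 1)) (X n' ω))} := rfl
    rw [← hdef] at hmem
    rcases hmem with ⟨_, h'⟩ | ⟨_, hno⟩
    · exact h'
    · exact absurd hex hno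

lemma inCube_mono {X : ℕ → Ω → Fin d → ℝ} {M : Ω → ℝ} {ω : Ω} (hM : 0 ≤ M ω) {K k : ℕ}
    (hk : K ≤ k) {x : Fin d → ℝ}
    (hx : inCube (corner X M k ω) (2 * M ω / 2 ^ k) x) :
    inCube (corner X M K ω) (2 * M ω / 2 ^ K) x := by
  induction k, hk using Nat.le_induction with
  | base => exact hx
  | succ k hKk ih =>
    apply ih
    have hs : (0 : ℝ) ≤ 2 * M ω / 2 ^ k := by positivity
    apply inCube_sub hs (pick X (corner X M k) (fun ω' => 2 * M ω' / 2 ^ k) ω)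
    have heq : 2 * M ω / 2 ^ (k + 1) = (2 * M ω / 2 ^ k) / 2 := by ring
    rw [← heq]
    exact hx

lemma tendsto_sel {X : ℕ → Ω → Fin d → ℝ} {M : Ω → ℝ} {ω : Ω} (hM : 0 ≤ M ω)
    (h0 : GoodAt X M 0 ω) :
    ∃ L : Fin d → ℝ, Tendsto (fun k => X (sel X M k ω) ω) atTop (nhds L) := by
  apply cauchySeq_tendsto_of_complete
  apply cauchySeq_of_le_tendsto_0 (fun K => 2 * M ω / 2 ^ K)
  · intro n m N hn hm
    have h1 := inCube_mono hM hn (sel_inCube hM h0 n)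
    have h2 := inCube_mono hM hm (sel_inCube hM h0 m)
    rw [dist_pi_le_iff (by positivity)]
    intro i
    rw [Real.dist_eq]
    obtain ⟨a1, b1⟩ := h1 i
    obtain ⟨a2, b2⟩ := h2 i
    rw [abs_sub_le_iff]
    constructor <;> linarith
  · have key : (fun K : ℕ => 2 * M ω / 2 ^ K) = fun K => (2 * M ω) * (1 / 2 : ℝ) ^ K := by
      funext K
      rw [div_eq_mul_inv, one_div, inv_pow]
    rw [key]
    have := (tendsto_pow_atTop_nhds_zero_of_lt_one
      (by norm_num : (0:ℝ) ≤ 1 / 2) (by norm_num : (1/2 : ℝ) < 1)).const_mul (2 * M ω)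
    simpa using this

end Stmt15Aux

/-- If `X_n` are `ℝ^d`-valued random vectors with
`liminf_n ‖X_n(ω)‖ < ∞` for a.e. `ω`, then there is an a.s. increasing sequence of
integer-valued random variables `σ_k` such that `X_{σ_k}` converges almost surely
(i.e. a.e. `(X_{σ_k(ω)}(ω))_k` is a convergent subsequence of `(X_n(ω))_n`). -/
theorem stmt15 {Ω : Type*} [MeasurableSpace Ω] {d : ℕ}
    (P : MeasureTheory.Measure Ω) [MeasureTheory.IsProbabilityMeasure P]
    (X : ℕ → Ω → Fin d → ℝ) (hX : ∀ n, Measurable (X n))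
    (hbd : ∀ᵐ ω ∂P, Filter.liminf (fun n => (‖X n ω‖₊ : ℝ≥0∞)) Filter.atTop < ⊤) :
    ∃ σ : ℕ → Ω → ℕ,
      (∀ k, Measurable (σ k)) ∧
      (∀ᵐ ω ∂P, ∀ k, σ k ω < σ (k + 1) ω) ∧
      (∀ᵐ ω ∂P, ∃ L : Fin d → ℝ,
        Filter.Tendsto (fun k => X (σ k ω) ω) Filter.atTop (nhds L)) := by
  classical
  set M : Ω → ℝ :=
    fun ω => (Filter.liminf (fun n => (‖X n ω‖₊ : ℝ≥0∞)) Filter.atTop).toReal + 1 with hMdef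
  have hM : Measurable M := by
    apply Measurable.add _ measurable_const
    apply Measurable.ennreal_toReal
    exact Measurable.liminf fun n => (hX n).nnnorm.coe_nnreal_ennreal
  have hM0 : ∀ ω, 0 ≤ M ω := fun ω =>
    add_nonneg ENNReal.toReal_nonneg zero_le_one
  refine ⟨Stmt15Aux.sel X M, fun k => Stmt15Aux.measurable_sel hX hM k, ?_, ?_⟩
  · exact Filter.Eventually.of_forall fun ω k => Stmt15Aux.sel_lt_succ X M ω k
  · filter_upwards [hbd] with ω hω
    apply Stmt15Aux.tendsto_sel (hM0 ω)
    intro m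
    have hlt : Filter.liminf (fun n => (‖X n ω‖₊ : ℝ≥0∞)) Filter.atTop <
        Filter.liminf (fun n => (‖X n ω‖₊ : ℝ≥0∞)) Filter.atTop + 1 :=
      ENNReal.lt_add_right hω.ne one_ne_zero
    have hfreq := Filter.frequently_lt_of_liminf_lt (by isBoundedDefault) hlt
    rw [Filter.frequently_atTop] at hfreq
    obtain ⟨n, hn, hXn⟩ := hfreq m
    refine ⟨n, hn, ?_⟩
    have hnorm : ‖X n ω‖ ≤ M ω := by
      have hfin : Filter.liminf (fun n => (‖X n ω‖₊ : ℝ≥0∞)) Filter.atTop + 1 ≠ ⊤ :=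
        ENNReal.add_ne_top.mpr ⟨hω.ne, ENNReal.one_ne_top⟩
      have h1 : ((‖X n ω‖₊ : ℝ≥0∞)).toReal ≤
          (Filter.liminf (fun n => (‖X n ω‖₊ : ℝ≥0∞)) Filter.atTop + 1).toReal :=
        ENNReal.toReal_mono hfin hXn.le
      rw [ENNReal.toReal_add hω.ne ENNReal.one_ne_top] at h1
      simpa [hMdef] using h1
    intro i
    have habs : |X n ω i| ≤ M ω :=
      le_trans (by simpa [Real.norm_eq_abs] using norm_le_pi_norm (X n ω) i) hnorm
    have hc : Stmt15Aux.corner X M 0 ω i = -(M ω) := rfl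
    rw [hc]
    have h2M : 2 * M ω / 2 ^ 0 = 2 * M ω := by norm_num
    rw [h2M]
    obtain ⟨hl, hr⟩ := abs_le.mp habs
    constructor <;> linarith
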